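/- Let 𝔫 be the 5-dimensional real Lie algebra l₅,₉ (case B) with orthonormal basis {E₁,…,E₅} and non-zero brackets [E₁,E₂] = m·E₃ + s·E₄, [E₁,E₃] = v·E₄, [E₂,E₃] = v·E₅, where m, v > 0 and s ≥ 0. Then there exist c ∈ ℝ and a derivation D of 𝔫 with Ric = c·Id + D if and only if s = 0 and v = (√3/2)·m; moreover, in that case necessarily c = −(3/2)m². -/
import Mathlib


open scoped BigOperators

namespace Nilsoliton14

noncomputable section

abbrev V : Type := Fin 5 → ℝ

/-- The orthonormal basis vectors E₁,…,E₅ (indexed 0,…,4). -/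
def E (i : Fin 5) : V := Pi.single i 1

/-- The inner product making `E` an orthonormal basis. -/
def ip (x y : V) : ℝ := ∑ i, x i * y i

/-- `D` is a derivation of the bracket `br`. -/
def IsDerivation (br : V → V → V) (D : V →ₗ[ℝ] V) : Prop :=
  ∀ X Y : V, D (br X Y) = br (D X) Y + br X (D Y)

/-- `Ric` is the Ricci operator of the nilpotent Lie group with left-invariant
metric determined by the bracket `br` and the orthonormal basis `E`. -/
def IsRicci (br : V → V → V) (Ric : V →ₗ[ℝ] V) : Prop :=
  ∀ X Y : V, ip (Ric X) Y =
      -(1/2) * (∑ i : Fin 5, ip (br X (E i)) (br Y (E i)))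
      + (1/4) * (∑ i : Fin 5, ∑ j : Fin 5, ip (br (E i) (E j)) X * ip (br (E i) (E j)) Y)

/-- The bracket of l₅,₉ (case B): [E₁,E₂] = m·E₃ + s·E₄,
[E₁,E₃] = v·E₄, [E₂,E₃] = v·E₅. -/
def br (m s v : ℝ) (X Y : V) : V :=
  (m * (X 0 * Y 1 - X 1 * Y 0)) • E 2 + (s * (X 0 * Y 1 - X 1 * Y 0) + v * (X 0 * Y 2 - X 2 * Y 0)) • E 3 + (v * (X 1 * Y 2 - X 2 * Y 1)) • E 4

lemma ip_E (x : V) (b : Fin 5) : ip x (E b) = x b := by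
  simp [ip, E, Pi.single_apply, mul_ite]

lemma ric_apply (m s v : ℝ) (Ric : V →ₗ[ℝ] V) (hRic : IsRicci (br m s v) Ric)
    (X : V) : Ric X = ![ -((m^2+s^2+v^2)/2) * X 0,
      -((m^2+s^2+v^2)/2) * X 1 - (s*v/2) * X 2,
      -(s*v/2) * X 1 + (m^2/2 - v^2) * X 2 + (m*s/2) * X 3,
      (m*s/2) * X 2 + ((s^2+v^2)/2) * X 3,
      (v^2/2) * X 4 ] := by
  funext b
  have h := hRic X (E b)
  rw [ip_E] at h
  rw [h]
  fin_cases b <;>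
    simp [ip, br, E, Pi.single_apply, Fin.sum_univ_five] <;> ring

/-- A diagonal linear map on `V`. -/
def diagMap (d : Fin 5 → ℝ) : V →ₗ[ℝ] V where
  toFun X := fun i => d i * X i
  map_add' X Y := by funext i; simp [mul_add]
  map_smul' r X := by funext i; simp; ring

lemma der_diag (m v : ℝ) :
    IsDerivation (br m 0 v) (diagMap ![5*m^2/8, 5*m^2/8, 5*m^2/4, 15*m^2/8, 15*m^2/8]) := by
  intro X Y
  funext b
  fin_cases b <;>
    simp [br, E, diagMap, Pi.single_apply] <;> ring

lemma forward (m s v : ℝ) (hm : 0 < m) (hv : 0 < v) (hs : 0 ≤ s)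
    (Ric : V →ₗ[ℝ] V) (hRic : IsRicci (br m s v) Ric)
    (c : ℝ) (D : V →ₗ[ℝ] V) (hder : IsDerivation (br m s v) D)
    (heq : Ric = c • (LinearMap.id : V →ₗ[ℝ] V) + D) :
    s = 0 ∧ c = -(3/2) * m ^ 2 ∧ v ^ 2 = 3/4 * m ^ 2 := by
  have hR := ric_apply m s v Ric hRic
  have hD : ∀ X : V, D X = Ric X - c • X := by
    intro X
    rw [heq]; simp
  have e1 := congrFun (hder (E 0) (E 1)) 1
  simp [hD, hR, br, E, Pi.single_apply] at e1
  have e2 := congrFun (hder (E 0) (E 1)) 2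
  simp [hD, hR, br, E, Pi.single_apply] at e2
  have e3 := congrFun (hder (E 0) (E 2)) 3
  simp [hD, hR, br, E, Pi.single_apply] at e3
  have hs0 : s = 0 := by
    rcases e1 with (h | h) | h
    · exact h
    · exact absurd h hv.ne'
    · exact absurd h hm.ne'
  subst hs0
  have hc : c = -(3/2) * m ^ 2 := by nlinarith [e2, sq_nonneg m]
  refine ⟨rfl, hc, ?_⟩
  nlinarith [e3, hc]

theorem stmt14 (m s v : ℝ) (hm : 0 < m) (hv : 0 < v) (hs : 0 ≤ s)
    (Ric : V →ₗ[ℝ] V) (hRic : IsRicci (br m s v) Ric) :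
    ((∃ (c : ℝ) (D : V →ₗ[ℝ] V), IsDerivation (br m s v) D ∧
        Ric = c • (LinearMap.id : V →ₗ[ℝ] V) + D) ↔ (s = 0 ∧ v = (Real.sqrt 3 / 2) * m)) ∧
    (∀ (c : ℝ) (D : V →ₗ[ℝ] V), IsDerivation (br m s v) D →
        Ric = c • (LinearMap.id : V →ₗ[ℝ] V) + D → c = -(3/2) * m ^ 2) := by
  constructor
  · constructor
    · rintro ⟨c, D, hder, heq⟩
      obtain ⟨hs0, hc, hv2⟩ := forward m s v hm hv hs Ric hRic c D hder heq
      refine ⟨hs0, ?_⟩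
      have hsq : Real.sqrt 3 ^ 2 = 3 := Real.sq_sqrt (by norm_num)
      have h3 : (Real.sqrt 3 / 2 * m) ^ 2 = 3/4 * m ^ 2 := by
        linear_combination (m ^ 2 / 4) * hsq
      have hpos : 0 < Real.sqrt 3 / 2 * m := by positivity
      nlinarith [hv2, h3, hpos, hv]
    · rintro ⟨hs0, hveq⟩
      subst hs0
      have hsq : Real.sqrt 3 ^ 2 = 3 := Real.sq_sqrt (by norm_num)
      have hv2 : v ^ 2 = 3/4 * m ^ 2 := by
        rw [hveq]; linear_combination (m ^ 2 / 4) * hsq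
      refine ⟨-(3/2) * m ^ 2, diagMap ![5*m^2/8, 5*m^2/8, 5*m^2/4, 15*m^2/8, 15*m^2/8],
        der_diag m v, ?_⟩
      have hR := ric_apply m 0 v Ric hRic
      refine LinearMap.ext fun X => ?_
      rw [hR]
      funext b
      fin_cases b
      · simp [diagMap]; linear_combination (-(X 0)/2) * hv2
      · simp [diagMap]; linear_combination (-(X 1)/2) * hv2
      · simp [diagMap]; linear_combination (-(X 2)) * hv2
      · simp [diagMap]; linear_combination ((X 3)/2) * hv2
      · simp [diagMap]; linear_combination ((X 4)/2) * hv2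
  · intro c D hder heq
    exact (forward m s v hm hv hs Ric hRic c D hder heq).2.1

end

end Nilsoliton14
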